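/- For a two-table equi-semijoin query, the iterative refinement achieves zero false positives: with finite tables O (outer) and L (inner), selections σ_O, σ_L, and semijoin output Out = {o ∈ σ_O(O) | ∃ l ∈ σ_L(L), key o = key l}, the fixpoint sets O* = {o ∈ σ_O(O) | key o ∈ key '' σ_L(L)} and L* = {l ∈ σ_L(L) | key l ∈ key '' σ_O(O)} satisfy: O* equals the union over all t ∈ Out of the lineage of t in O, and L* equals the union over all t ∈ Out of the lineage of t in L, when the target predicate selects the entire output (F = True on Out). -/
import Mathlib


/-- for a two-table equi-semijoin, the iterative-refinement fixpoint sets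
equal the union of lineages over all output rows (zero false positives). -/
theorem stmt_14 {OT LT K : Type*} (keyO : OT → K) (keyL : LT → K)
    (O : Set OT) (L : Set LT) (hO : O.Finite) (hL : L.Finite)
    (σO : Set OT → Set OT) (σL : Set LT → Set LT)
    (hσO : ∀ X : Set OT, σO X ⊆ X) (hσL : ∀ X : Set LT, σL X ⊆ X)
    (Out : Set OT) (hOut : Out = {o ∈ σO O | ∃ l ∈ σL L, keyO o = keyL l})
    (Ostar : Set OT) (hOstar : Ostar = {o ∈ σO O | keyO o ∈ keyL '' σL L})
    (Lstar : Set LT) (hLstar : Lstar = {l ∈ σL L | keyL l ∈ keyO '' σO O}) :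
    Ostar = ⋃ t ∈ Out, ({t} : Set OT) ∧
    Lstar = ⋃ t ∈ Out, {l ∈ σL L | keyL l = keyO t} := by
  subst hOut hOstar hLstar
  constructor
  · ext o
    simp only [Set.mem_iUnion, Set.mem_singleton_iff, Set.mem_setOf_eq, Set.mem_image]
    aesop
  · ext l
    simp only [Set.mem_iUnion, Set.mem_setOf_eq, Set.mem_image]
    constructor
    · rintro ⟨hl, o, ho, hk⟩
      exact ⟨o, ⟨ho, l, hl, hk⟩, hl, hk.symm⟩
    · rintro ⟨o, ⟨ho, _⟩, hl, hk⟩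
      exact ⟨hl, o, ho, hk.symm⟩
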